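/- Let G be a subgroup of S_n (acting on ℝ^n by coordinate permutations) that is the intersection of a point-stabilizer stab(x) with line-stabilizers stab(l₁),…,stab(l_t), where x ∈ ℝ^n and each l_i is a line orthogonal to the subspace ⟨x, l_1,…,l_{i-1}⟩-generated partition subspace, and suppose the span of x together with l₁,…,l_t is not contained in any proper diagonal subspace H ∈ Π_n (i.e., no two coordinates are identically equal on this span). Then every element of G is an involution or the identity, and G is abelian; moreover G ≅ ℤ₂^h with h ≤ ⌊n/2⌋. -/

import Mathlib

lemma even_card_of_pairing {α : Type*} [DecidableEq α] (f : α → α) :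
    ∀ m : ℕ, ∀ s : Finset α, s.card ≤ m → (∀ a ∈ s, f a ∈ s) →
      (∀ a ∈ s, f (f a) = a) → (∀ a ∈ s, f a ≠ a) → Even s.card := by
  intro m
  induction m with
  | zero => intro s hs _ _ _; simp [Nat.le_zero.mp hs]
  | succ m ih =>
    intro s hs hmap hinv hne
    rcases s.eq_empty_or_nonempty with rfl | ⟨a, ha⟩
    · simp
    · set s' := (s.erase a).erase (f a) with hs'
      have hfa : f a ∈ s := hmap a ha
      have hfa' : f a ≠ a := hne a ha
      have hcard : s'.card = s.card - 2 := by
        rw [hs', Finset.card_erase_of_mem (Finset.mem_erase.mpr ⟨hfa', hfa⟩),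
          Finset.card_erase_of_mem ha]
        omega
      have hsub : s' ⊆ s := fun b hb =>
        Finset.mem_of_mem_erase (Finset.mem_of_mem_erase hb)
      have hmap' : ∀ b ∈ s', f b ∈ s' := by
        intro b hb
        have hbs := hsub hb
        have hba : b ≠ f a := (Finset.mem_erase.mp hb).1
        have hba' : b ≠ a := (Finset.mem_erase.mp (Finset.mem_of_mem_erase hb)).1
        refine Finset.mem_erase.mpr ⟨?_, Finset.mem_erase.mpr ⟨?_, hmap b hbs⟩⟩
        · intro h; exact hba' (by rw [← hinv b hbs, h, hinv a ha])
        · intro h; exact hba (by rw [← hinv b hbs, h])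
      have hcard2 : 2 ≤ s.card := by
        have := Finset.one_lt_card.mpr ⟨a, ha, f a, hfa, fun h => hfa' h.symm⟩
        omega
      have := ih s' (by omega) hmap' (fun b hb => hinv b (hsub hb))
        (fun b hb => hne b (hsub hb))
      rw [hcard] at this
      rcases this with ⟨k, hk⟩
      exact ⟨k + 1, by omega⟩


lemma struct_elem_ab {P : Type*} [Group P] (G : Subgroup P) [Finite ↥G]
    (hinv : ∀ g ∈ G, g * g = 1) :
    ∃ h : ℕ, 2 ^ h = Nat.card ↥G ∧
      Nonempty (↥G ≃* Multiplicative (Fin h → ZMod 2)) := by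
  have hsq : ∀ u : ↥G, u * u = 1 := by
    intro u; ext; exact hinv u.1 u.2
  have hinv' : ∀ u : ↥G, u⁻¹ = u := fun u => inv_eq_of_mul_eq_one_right (hsq u)
  letI : CommGroup ↥G :=
    { (inferInstance : Group ↥G) with
      mul_comm := fun a b => by
        calc a * b = (a * b)⁻¹ := (hinv' _).symm
          _ = b⁻¹ * a⁻¹ := mul_inv_rev a b
          _ = b * a := by rw [hinv', hinv'] }
  letI : Module (ZMod 2) (Additive ↥G) := AddCommGroup.zmodModule (by
    intro x
    show (2 : ℕ) • x = 0
    rw [two_nsmul]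
    exact hsq x.toMul)
  letI : Module.Finite (ZMod 2) (Additive ↥G) := Module.Finite.of_finite
  set h := Module.finrank (ZMod 2) (Additive ↥G) with hh
  have b : Module.Basis (Fin h) (ZMod 2) (Additive ↥G) := Module.finBasis _ _
  have e : Additive ↥G ≃ₗ[ZMod 2] (Fin h → ZMod 2) := b.equivFun
  refine ⟨h, ?_, ⟨?_⟩⟩
  · have : Nat.card (Additive ↥G) = Nat.card (Fin h → ZMod 2) :=
      Nat.card_congr e.toEquiv
    rw [Nat.card_fun] at this
    exact (by simpa [Nat.card_eq_fintype_card] using this.symm : 2 ^ h = Nat.card (Additive ↥G))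
  · exact
    { toFun := fun g => Multiplicative.ofAdd (e (Additive.ofMul g))
      invFun := fun z => Additive.toMul (e.symm (Multiplicative.toAdd z))
      left_inv := fun g => by simp
      right_inv := fun z => by simp
      map_mul' := fun a b => by
        show Multiplicative.ofAdd (e (Additive.ofMul (a * b))) = _
        rw [show Additive.ofMul (a * b) = Additive.ofMul a + Additive.ofMul b from rfl,
          map_add]
        rfl }



/-- The stabilizer of a point `v ∈ ℝⁿ` under the coordinate permutation action of `Sₙ`. -/
def pstab {n : ℕ} (v : Fin n → ℝ) : Subgroup (Equiv.Perm (Fin n)) where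
  carrier := {σ | ∀ i, v (σ i) = v i}
  one_mem' := fun _ => rfl
  mul_mem' := by
    intro a b ha hb i
    simp only [Set.mem_setOf_eq] at ha hb
    rw [Equiv.Perm.mul_apply, ha, hb]
  inv_mem' := by
    intro a ha i
    simp only [Set.mem_setOf_eq] at ha ⊢
    have := ha (a⁻¹ i)
    simpa using this.symm

/-- The stabilizer of a subspace `l ⊆ ℝⁿ` under the coordinate permutation action of `Sₙ`:
permutations `σ` with `σ(l) = l` as a set. -/
def lineStab {n : ℕ} (l : Submodule ℝ (Fin n → ℝ)) : Subgroup (Equiv.Perm (Fin n)) where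
  carrier := {σ | (fun x : Fin n → ℝ => x ∘ σ) '' (l : Set (Fin n → ℝ)) = l}
  one_mem' := by
    simp only [Set.mem_setOf_eq]
    have h : (fun x : Fin n → ℝ => x ∘ ⇑(1 : Equiv.Perm (Fin n))) = id := by
      funext x; rfl
    rw [h, Set.image_id]
  mul_mem' := by
    intro a b ha hb
    simp only [Set.mem_setOf_eq] at ha hb ⊢
    have h : (fun x : Fin n → ℝ => x ∘ ⇑(a * b)) =
        (fun x : Fin n → ℝ => x ∘ ⇑b) ∘ (fun x : Fin n → ℝ => x ∘ ⇑a) := by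
      funext x; funext i
      simp [Equiv.Perm.mul_apply, Function.comp]
    rw [h, Set.image_comp, ha, hb]
  inv_mem' := by
    intro a ha
    simp only [Set.mem_setOf_eq] at ha ⊢
    have key : ((fun x : Fin n → ℝ => x ∘ ⇑a⁻¹) ∘ (fun x : Fin n → ℝ => x ∘ ⇑a)) = id := by
      funext x; funext i
      simp [Function.comp]
    calc (fun x : Fin n → ℝ => x ∘ ⇑a⁻¹) '' (l : Set (Fin n → ℝ))
        = (fun x : Fin n → ℝ => x ∘ ⇑a⁻¹) ''
            ((fun x : Fin n → ℝ => x ∘ ⇑a) '' (l : Set (Fin n → ℝ))) := by rw [ha]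
      _ = (l : Set (Fin n → ℝ)) := by rw [← Set.image_comp, key, Set.image_id]

lemma card_le_of_inv {α : Type*} [Fintype α] [DecidableEq α] :
    ∀ m : ℕ, ∀ s : Finset α, s.card ≤ m → ∀ G : Subgroup (Equiv.Perm α),
      (∀ g ∈ G, g * g = 1) → (∀ g ∈ G, ∀ i, i ∉ s → g i = i) →
      Nat.card G ≤ 2 ^ (s.card / 2) := by
  intro m
  induction m with
  | zero =>
    intro s hs G hinv hsupp
    have : G = ⊥ := by
      rw [Subgroup.eq_bot_iff_forall]
      intro g hg
      ext i
      exact hsupp g hg i (by simp [Finset.card_eq_zero.mp (Nat.le_zero.mp hs)])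
    subst this
    simp [Nat.one_le_two_pow]
  | succ m ih =>
    intro s hs G hinv hsupp
    classical
    by_cases hG : ∀ g ∈ G, g = 1
    · have : G = ⊥ := by rw [Subgroup.eq_bot_iff_forall]; exact hG
      subst this; simp [Nat.one_le_two_pow]
    push_neg at hG
    obtain ⟨g, hgG, hg1⟩ := hG
    -- abelian
    have hab : ∀ a ∈ G, ∀ b ∈ G, a * b = b * a := by
      intro a haG b hbG
      have h1 := hinv _ (G.mul_mem haG hbG)
      have h2 := hinv a haG
      have h3 := hinv b hbG
      have ha' : a⁻¹ = a := inv_eq_of_mul_eq_one_right h2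
      have hb' : b⁻¹ = b := inv_eq_of_mul_eq_one_right h3
      have : (a*b)⁻¹ = a * b := inv_eq_of_mul_eq_one_right h1
      calc a * b = (a*b)⁻¹ := this.symm
        _ = b⁻¹ * a⁻¹ := by rw [mul_inv_rev]
        _ = b * a := by rw [ha', hb']
    obtain ⟨i, hi⟩ : ∃ i, g i ≠ i := by
      by_contra h; push_neg at h; exact hg1 (Equiv.ext h)
    have his : i ∈ s := by
      by_contra h; exact hi (hsupp g hgG i h)
    -- the orbit of i
    set O : Finset α := Finset.univ.filter (fun a => ∃ u ∈ G, u i = a) with hO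
    have hmemO : ∀ a, a ∈ O ↔ ∃ u ∈ G, u i = a := by
      intro a; simp [hO]
    have hiO : i ∈ O := (hmemO i).mpr ⟨1, G.one_mem, rfl⟩
    have hOs : O ⊆ s := by
      intro a haO
      obtain ⟨u, huG, hua⟩ := (hmemO a).mp haO
      by_contra has
      have hfix : (u⁻¹ : Equiv.Perm α) a = a := hsupp u⁻¹ (G.inv_mem huG) a has
      have hia : i = a := by
        have h2 : (u⁻¹ : Equiv.Perm α) (u i) = (u⁻¹ : Equiv.Perm α) a := congrArg _ hua
        simpa [hfix] using h2
      exact has (hia ▸ his)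
    have hgO : ∀ a ∈ O, g a ∈ O := by
      intro a haO
      obtain ⟨u, huG, hua⟩ := (hmemO a).mp haO
      exact (hmemO (g a)).mpr ⟨g * u, G.mul_mem hgG huG, by simp [hua]⟩
    have hgne : ∀ a ∈ O, g a ≠ a := by
      intro a haO
      obtain ⟨u, huG, hua⟩ := (hmemO a).mp haO
      intro h
      apply hi
      have hcomm := hab g hgG u huG
      have : g (u i) = u (g i) := by
        calc g (u i) = (g * u) i := rfl
          _ = (u * g) i := by rw [hcomm]
          _ = u (g i) := rfl
      rw [hua] at this
      rw [h] at this
      rw [← hua] at this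
      exact (u.injective this.symm)
    have hgg : ∀ a ∈ O, g (g a) = a := by
      intro a _
      have := congrFun (congrArg (fun p : Equiv.Perm α => (p : α → α)) (hinv g hgG)) a
      simpa [Equiv.Perm.mul_apply] using this
    have hOeven : Even O.card :=
      even_card_of_pairing g O.card O le_rfl hgO hgg hgne
    have hO2 : 2 ≤ O.card := by
      have : g i ∈ O := hgO i hiO
      exact Finset.one_lt_card.mpr ⟨i, hiO, g i, this, fun h => hi (h.symm)⟩
    -- the stabilizer subgroup
    set H : Subgroup (Equiv.Perm α) := G ⊓ MulAction.stabilizer (Equiv.Perm α) i with hH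
    have hHmem : ∀ h : Equiv.Perm α, h ∈ H ↔ h ∈ G ∧ h i = i := by
      intro h; simp [hH, Subgroup.mem_inf, MulAction.mem_stabilizer_iff, Equiv.Perm.smul_def]
    have hHfix : ∀ h ∈ H, ∀ a ∈ O, h a = a := by
      intro h hh a haO
      obtain ⟨hhG, hhi⟩ := (hHmem h).mp hh
      obtain ⟨u, huG, hua⟩ := (hmemO a).mp haO
      have hcomm := hab h hhG u huG
      calc h a = h (u i) := by rw [hua]
        _ = (h * u) i := rfl
        _ = (u * h) i := by rw [hcomm]
        _ = u (h i) := rfl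
        _ = u i := by rw [hhi]
        _ = a := hua
    have hHsupp : ∀ h ∈ H, ∀ a, a ∉ s \ O → h a = a := by
      intro h hh a ha
      rcases Finset.mem_sdiff.not.mp ha |> not_and_or.mp with h1 | h2
      · exact hsupp h ((hHmem h).mp hh).1 a h1
      · exact hHfix h hh a (not_not.mp h2)
    have hcards : (s \ O).card = s.card - O.card := Finset.card_sdiff_of_subset hOs
    have hIH : Nat.card H ≤ 2 ^ ((s \ O).card / 2) :=
      ih (s \ O) (by omega) H (fun h hh => hinv h ((hHmem h).mp hh).1) hHsupp
    -- orbit-stabilizer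
    have horb : Nat.card G = O.card * Nat.card H := by
      letI : Fintype ↥G := Fintype.ofFinite _
      letI : Fintype (MulAction.orbit ↥G i) := Fintype.ofFinite _
      letI : Fintype (MulAction.stabilizer ↥G i) := Fintype.ofFinite _
      have e1 : Nat.card ↥G =
          Nat.card (MulAction.orbit ↥G i) * Nat.card (MulAction.stabilizer ↥G i) := by
        simp only [Nat.card_eq_fintype_card]
        exact (MulAction.card_orbit_mul_card_stabilizer_eq_card_group ↥G i).symm
      have e2 : (MulAction.orbit ↥G i : Set α) = (O : Set α) := by
        ext a
        simp only [MulAction.mem_orbit_iff, Finset.coe_filter, Set.mem_setOf_eq,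
          Finset.mem_coe, hmemO]
        constructor
        · rintro ⟨u, hu⟩
          exact ⟨u.1, u.2, hu⟩
        · rintro ⟨u, huG, hu⟩
          exact ⟨⟨u, huG⟩, hu⟩
      have e2' : Nat.card (MulAction.orbit ↥G i) = O.card := by
        rw [e2, Nat.card_coe_set_eq, Set.ncard_coe_finset]
      have e3 : Nat.card (MulAction.stabilizer ↥G i) = Nat.card H := by
        apply Nat.card_congr
        refine ⟨fun u => ⟨u.1.1, (hHmem _).mpr ⟨u.1.2, u.2⟩⟩,
          fun h => ⟨⟨h.1, ((hHmem h.1).mp h.2).1⟩, ((hHmem h.1).mp h.2).2⟩, ?_, ?_⟩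
        · intro u; rfl
        · intro h; rfl
      rw [e1, e2', e3]
    obtain ⟨q, hq⟩ := hOeven
    have hq1 : 1 ≤ q := by omega
    have hqpow : 2 * q ≤ 2 ^ q := by
      have := Nat.lt_two_pow_self (n := q - 1)
      have h2 : 2 ^ q = 2 * 2 ^ (q - 1) := by
        rw [← pow_succ']
        congr 1; omega
      omega
    have he : (s \ O).card / 2 = s.card / 2 - q := by omega
    have hqle : q ≤ s.card / 2 := by
      have := Finset.card_le_card hOs
      omega
    calc Nat.card G = O.card * Nat.card H := horb
      _ ≤ (2 ^ q) * 2 ^ ((s \ O).card / 2) := by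
          apply Nat.mul_le_mul _ hIH
          omega
      _ = 2 ^ (q + ((s \ O).card / 2)) := (pow_add 2 q _).symm
      _ = 2 ^ (s.card / 2) := by congr 1; omega

lemma lineStab_sq_fix {n : ℕ} {l : Submodule ℝ (Fin n → ℝ)}
    (hl : Module.finrank ℝ l = 1) {g : Equiv.Perm (Fin n)} (hg : g ∈ lineStab l) :
    ∀ y ∈ l, ∀ i, y (g (g i)) = y i := by
  obtain ⟨v, hv0, hvspan⟩ := finrank_eq_one_iff'.mp hl
  set v0 : Fin n → ℝ := (v : Fin n → ℝ) with hv0def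
  have hv0l : v0 ∈ l := v.2
  have hv0ne : v0 ≠ 0 := fun h => hv0 (Subtype.ext h)
  have hmem : (v0 ∘ g) ∈ l := by
    have h1 : (v0 ∘ g) ∈ (fun x : Fin n → ℝ => x ∘ g) '' (l : Set (Fin n → ℝ)) :=
      Set.mem_image_of_mem _ hv0l
    rw [show ((fun x : Fin n → ℝ => x ∘ ⇑g) '' (l : Set (Fin n → ℝ)) = l) from hg] at h1
    exact h1
  obtain ⟨c, hc⟩ := hvspan ⟨v0 ∘ g, hmem⟩
  have hc' : ∀ j, v0 (g j) = c * v0 j := by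
    intro j
    have := congrArg (fun w : l => (w : Fin n → ℝ) j) hc
    simpa using this.symm
  have hsum : ∑ j, (v0 (g j))^2 = ∑ j, (v0 j)^2 := Equiv.sum_comp g (fun j => (v0 j)^2)
  have hS : 0 < ∑ j, (v0 j)^2 := by
    obtain ⟨j, hj⟩ := Function.ne_iff.mp hv0ne
    apply Finset.sum_pos' (fun k _ => sq_nonneg _)
    exact ⟨j, Finset.mem_univ j, by simpa [sq] using mul_self_pos.mpr hj⟩
  have hc2 : c^2 = 1 := by
    have : ∑ j, (v0 (g j))^2 = c^2 * ∑ j, (v0 j)^2 := by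
      rw [Finset.mul_sum]
      exact Finset.sum_congr rfl (fun j _ => by rw [hc' j]; ring)
    rw [hsum] at this
    have h2 : (c^2 - 1) * ∑ j, (v0 j)^2 = 0 := by linarith
    rcases mul_eq_zero.mp h2 with h | h
    · linarith
    · linarith
  intro y hy i
  obtain ⟨r, hr⟩ := hvspan ⟨y, hy⟩
  have hry : ∀ j, y j = r * v0 j := by
    intro j
    have := congrArg (fun w : l => (w : Fin n → ℝ) j) hr
    simpa using this.symm
  rw [hry (g (g i)), hry i, hc' (g i), hc' i]
  have hcc : c * c = 1 := by nlinarith [hc2]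
  calc r * (c * (c * v0 i)) = (c * c) * (r * v0 i) := by ring
    _ = r * v0 i := by rw [hcc, one_mul]

/-- If `G ⊆ Sₙ` is the intersection of the stabilizer of a point `x` with the
stabilizers of lines `l₁,…,l_t`, and the span of `x` together with the lines is not
contained in any proper diagonal subspace (no two coordinates identically equal on it),
then every element of `G` is an involution or the identity, `G` is abelian, and
`G ≅ ℤ₂ʰ` for some `h ≤ ⌊n/2⌋`. -/
theorem stmt15 {n t : ℕ} (x : Fin n → ℝ) (l : Fin t → Submodule ℝ (Fin n → ℝ))
    (hl : ∀ a, Module.finrank ℝ (l a) = 1)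
    (hnd : ∀ i j : Fin n, i ≠ j →
      ¬ (∀ y ∈ Submodule.span ℝ {x} ⊔ ⨆ a : Fin t, l a, y i = y j)) :
    (∀ g ∈ pstab x ⊓ ⨅ a : Fin t, lineStab (l a), g * g = 1) ∧
    (∀ g₁ ∈ pstab x ⊓ ⨅ a : Fin t, lineStab (l a),
      ∀ g₂ ∈ pstab x ⊓ ⨅ a : Fin t, lineStab (l a), g₁ * g₂ = g₂ * g₁) ∧
    ∃ h : ℕ, h ≤ n / 2 ∧
      Nonempty ((↥(pstab x ⊓ ⨅ a : Fin t, lineStab (l a))) ≃*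
        Multiplicative (Fin h → ZMod 2)) := by
  classical
  set G := pstab x ⊓ ⨅ a : Fin t, lineStab (l a) with hG
  have hmem : ∀ g, g ∈ G → (∀ i, x (g i) = x i) ∧ ∀ a, g ∈ lineStab (l a) := by
    intro g hg
    rw [hG, Subgroup.mem_inf] at hg
    exact ⟨hg.1, fun a => (Subgroup.mem_iInf.mp hg.2) a⟩
  have hsq : ∀ g ∈ G, g * g = 1 := by
    intro g hg
    obtain ⟨hgx, hgl⟩ := hmem g hg
    by_contra hne
    obtain ⟨i, hi⟩ : ∃ i, g (g i) ≠ i := by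
      by_contra hc; push_neg at hc
      apply hne
      ext j
      simp [Equiv.Perm.mul_apply, hc j]
    apply hnd (g (g i)) i hi
    intro y hy
    set K : Submodule ℝ (Fin n → ℝ) :=
      { carrier := {z | ∀ j, z (g (g j)) = z j}
        add_mem' := fun {z₁ z₂} h₁ h₂ j => by
          simp only [Pi.add_apply, h₁ j, h₂ j]
        zero_mem' := fun j => rfl
        smul_mem' := fun c z hz j => by
          simp only [Pi.smul_apply, hz j] } with hKdef
    have hK : Submodule.span ℝ {x} ⊔ ⨆ a : Fin t, l a ≤ K := by
      apply sup_le
      · rw [Submodule.span_le]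
        intro z hz
        rcases Set.mem_singleton_iff.mp hz with rfl
        intro j
        rw [hgx (g j), hgx j]
      · exact iSup_le fun a z hz => lineStab_sq_fix (hl a) (hgl a) z hz
    exact (hK hy) i
  have hcomm : ∀ g₁ ∈ G, ∀ g₂ ∈ G, g₁ * g₂ = g₂ * g₁ := by
    intro a haG b hbG
    have h1 := hsq _ (G.mul_mem haG hbG)
    have ha' : a⁻¹ = a := inv_eq_of_mul_eq_one_right (hsq a haG)
    have hb' : b⁻¹ = b := inv_eq_of_mul_eq_one_right (hsq b hbG)
    have hab' : (a * b)⁻¹ = a * b := inv_eq_of_mul_eq_one_right h1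
    calc a * b = (a * b)⁻¹ := hab'.symm
      _ = b⁻¹ * a⁻¹ := mul_inv_rev a b
      _ = b * a := by rw [ha', hb']
  refine ⟨hsq, hcomm, ?_⟩
  have hcard : Nat.card ↥G ≤ 2 ^ (n / 2) := by
    have := card_le_of_inv n (Finset.univ : Finset (Fin n)) (by simp) G hsq
      (fun g _ i hi => absurd (Finset.mem_univ i) hi)
    simpa using this
  obtain ⟨h, hpow, hequiv⟩ := struct_elem_ab G hsq
  refine ⟨h, ?_, hequiv⟩
  have : 2 ^ h ≤ 2 ^ (n / 2) := hpow ▸ hcard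
  exact (Nat.pow_le_pow_iff_right (by norm_num)).mp this
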